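/- Let p = 2^m + 1 be prime, let g be a primitive root modulo p, and for k ∈ {0,1,…,m−1} and an integer t let N_{k,t} denote the number of pairs (c,d) of residues modulo 2^{m−k−1} satisfying g^{2^{k+1}·c + t} + g^{2^{k+1}·d + 2^k + t} ≡ 1 (mod p). Then for any k ∈ {0,1,…,m−1} and any integers t₁, t₂ with t₁ ≡ t₂ (mod 2^k), one has N_{k,t₁} = N_{k,t₂}. -/

import Mathlib

/-- `NN p m g k t` is the number of pairs `(c, d)` of residues modulo `2 ^ (m - k - 1)`
satisfying `g ^ (2 ^ (k + 1) * c + t) + g ^ (2 ^ (k + 1) * d + 2 ^ k + t) ≡ 1 (mod p)`,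
where `g` is a unit modulo `p` (exponents are integers, i.e. are taken modulo the order
of `g`, which is `p - 1` for a primitive root). -/
def NN (p m : ℕ) (g : (ZMod p)ˣ) (k : ℕ) (t : ℤ) : ℕ :=
  ((Finset.range (2 ^ (m - k - 1)) ×ˢ Finset.range (2 ^ (m - k - 1))).filter
    (fun cd : ℕ × ℕ =>
      (↑(g ^ ((2 : ℤ) ^ (k + 1) * (cd.1 : ℤ) + t)) : ZMod p)
        + (↑(g ^ ((2 : ℤ) ^ (k + 1) * (cd.2 : ℤ) + (2 : ℤ) ^ k + t)) : ZMod p) = 1)).card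

section aux
variable (p m : ℕ) (g : (ZMod p)ˣ) (k : ℕ)

lemma gpow_congr (hord : (orderOf g : ℤ) = 2 ^ m) {a b : ℤ}
    (h : a ≡ b [ZMOD (2:ℤ) ^ m]) : g ^ a = g ^ b := by
  rw [zpow_eq_zpow_iff_modEq, Int.ModEq, hord]
  exact h

lemma NN_congr (hord : (orderOf g : ℤ) = 2 ^ m) {t t' : ℤ}
    (h : t ≡ t' [ZMOD (2:ℤ) ^ m]) : NN p m g k t = NN p m g k t' := by
  unfold NN
  congr 1
  apply Finset.filter_congr
  intro cd _
  rw [gpow_congr p m g hord (Int.ModEq.add_left _ h),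
      gpow_congr p m g hord (Int.ModEq.add_left _ h)]

lemma NN_add (hord : (orderOf g : ℤ) = 2 ^ m) (hk : k < m) (t : ℤ) :
    NN p m g k (t + 2 ^ k) = NN p m g k t := by
  set M : ℕ := 2 ^ (m - k - 1) with hM
  have hMpos : 0 < M := Nat.pow_pos (by norm_num)
  have h1M : 1 ≤ M := hMpos
  have hMmul : (2:ℤ) ^ (k + 1) * M = 2 ^ m := by
    rw [hM]; push_cast; rw [← pow_add]; congr 1; omega
  have key : ∀ a : ℕ, ((2:ℤ) ^ (k+1) * ((a % M : ℕ) : ℤ)) ≡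
      (2:ℤ) ^ (k+1) * (a : ℤ) [ZMOD (2:ℤ)^m] := by
    intro a
    rw [Int.modEq_iff_dvd]
    refine ⟨(a / M : ℕ), ?_⟩
    have hsub : (a:ℤ) - ((a % M : ℕ) : ℤ) = (M:ℤ) * (a / M : ℕ) := by
      have h := congrArg (Nat.cast : ℕ → ℤ) (Nat.mod_add_div a M)
      push_cast at h ⊢
      linarith
    rw [← hMmul, ← mul_sub, hsub]
    ring
  have modfact1 : ∀ a : ℕ, a < M → ((a + 1) % M + (M - 1)) % M = a := by
    intro a ha
    rw [Nat.mod_add_mod]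
    have h : a + 1 + (M - 1) = a + M := by omega
    rw [h, Nat.add_mod_right, Nat.mod_eq_of_lt ha]
  have modfact2 : ∀ a : ℕ, a < M → ((a + (M - 1)) % M + 1) % M = a := by
    intro a ha
    rw [Nat.mod_add_mod]
    have h : a + (M - 1) + 1 = a + M := by omega
    rw [h, Nat.add_mod_right, Nat.mod_eq_of_lt ha]
  unfold NN
  rw [← hM]
  refine Finset.card_bij' (fun cd _ => ((cd.2 + 1) % M, cd.1))
    (fun cd _ => (cd.2, (cd.1 + (M - 1)) % M)) ?hi ?hj ?li ?ri
  case hi =>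
    rintro ⟨c, d⟩ hcd
    simp only [Finset.mem_filter, Finset.mem_product, Finset.mem_range] at hcd ⊢
    obtain ⟨⟨hc, hd⟩, heq⟩ := hcd
    refine ⟨⟨Nat.mod_lt _ hMpos, hc⟩, ?_⟩
    have e1 : g ^ ((2:ℤ)^(k+1) * (((d+1) % M : ℕ) : ℤ) + t) =
        g ^ ((2:ℤ)^(k+1) * (d : ℤ) + 2^k + (t + 2^k)) := by
      apply gpow_congr p m g hord
      have h4 : (2:ℤ)^(k+1) * (d : ℤ) + 2^k + (t + 2^k) =
          (2:ℤ)^(k+1) * ((d+1 : ℕ) : ℤ) + t := by push_cast; ring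
      rw [h4]
      exact Int.ModEq.add_right t (key (d+1))
    have e2exp : (2:ℤ)^(k+1) * (c : ℤ) + 2^k + t =
        (2:ℤ)^(k+1) * (c : ℤ) + (t + 2^k) := by ring
    have e2 : g ^ ((2:ℤ)^(k+1) * (c : ℤ) + 2^k + t) =
        g ^ ((2:ℤ)^(k+1) * (c : ℤ) + (t + 2^k)) := by rw [e2exp]
    rw [e1, e2, add_comm]
    exact heq
  case hj =>
    rintro ⟨c, d⟩ hcd
    simp only [Finset.mem_filter, Finset.mem_product, Finset.mem_range] at hcd ⊢
    obtain ⟨⟨hc, hd⟩, heq⟩ := hcd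
    refine ⟨⟨hd, Nat.mod_lt _ hMpos⟩, ?_⟩
    have e1exp : (2:ℤ)^(k+1) * (d : ℤ) + (t + 2^k) =
        (2:ℤ)^(k+1) * (d : ℤ) + 2^k + t := by ring
    have e1 : g ^ ((2:ℤ)^(k+1) * (d : ℤ) + (t + 2^k)) =
        g ^ ((2:ℤ)^(k+1) * (d : ℤ) + 2^k + t) := by rw [e1exp]
    have e2 : g ^ ((2:ℤ)^(k+1) * (((c + (M-1)) % M : ℕ) : ℤ) + 2^k + (t + 2^k)) =
        g ^ ((2:ℤ)^(k+1) * (c : ℤ) + t) := by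
      apply gpow_congr p m g hord
      have h3 : (2:ℤ)^(k+1) * (((c + (M-1)) % M : ℕ) : ℤ) + 2^k + (t + 2^k) ≡
          (2:ℤ)^(k+1) * ((c + (M-1) : ℕ) : ℤ) + 2^k + (t + 2^k) [ZMOD (2:ℤ)^m] :=
        ((key (c + (M-1))).add_right _).add_right _
      have h4 : (2:ℤ)^(k+1) * ((c + (M-1) : ℕ) : ℤ) + 2^k + (t + 2^k) =
          (2:ℤ)^(k+1) * (c : ℤ) + t + 2^m := by
        push_cast [Nat.cast_sub h1M]
        rw [← hMmul]
        ring
      have h5 : (2:ℤ)^(k+1) * (c : ℤ) + t + 2^m ≡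
          (2:ℤ)^(k+1) * (c : ℤ) + t [ZMOD (2:ℤ)^m] :=
        Int.modEq_iff_dvd.mpr ⟨-1, by ring⟩
      exact h3.trans (h4 ▸ h5)
    rw [e1, e2, add_comm]
    exact heq
  case li =>
    rintro ⟨c, d⟩ hcd
    simp only [Finset.mem_filter, Finset.mem_product, Finset.mem_range] at hcd
    obtain ⟨⟨hc, hd⟩, -⟩ := hcd
    simp only [Prod.mk.injEq]
    exact ⟨trivial, modfact1 d hd⟩
  case ri =>
    rintro ⟨c, d⟩ hcd
    simp only [Finset.mem_filter, Finset.mem_product, Finset.mem_range] at hcd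
    obtain ⟨⟨hc, hd⟩, -⟩ := hcd
    simp only [Prod.mk.injEq]
    exact ⟨modfact2 c hc, trivial⟩

lemma NN_add_nat (hord : (orderOf g : ℤ) = 2 ^ m) (hk : k < m) (t : ℤ) (n : ℕ) :
    NN p m g k (t + 2 ^ k * n) = NN p m g k t := by
  induction n with
  | zero => simp
  | succ j ih =>
      have h : t + 2 ^ k * ((j + 1 : ℕ) : ℤ) = (t + 2 ^ k * j) + 2 ^ k := by
        push_cast; ring
      rw [h, NN_add p m g k hord hk, ih]

end aux

/-- If `p = 2 ^ m + 1` is prime, `g` is a primitive root modulo `p`,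
`k ∈ {0, …, m - 1}` and `t₁ ≡ t₂ (mod 2 ^ k)`, then `N_{k,t₁} = N_{k,t₂}`. -/
theorem N_eq_of_modeq_pow (p m : ℕ) (hp : p = 2 ^ m + 1) (hprime : p.Prime)
    (g : (ZMod p)ˣ) (hg : orderOf g = p - 1) (k : ℕ) (hk : k < m)
    (t₁ t₂ : ℤ) (ht : t₁ ≡ t₂ [ZMOD (2 : ℤ) ^ k]) :
    NN p m g k t₁ = NN p m g k t₂ := by
  have hord : (orderOf g : ℤ) = 2 ^ m := by
    have h1 : p - 1 = 2 ^ m := by rw [hp]; simp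
    rw [hg, h1]; push_cast; ring
  obtain ⟨s, hs⟩ : (2:ℤ)^k ∣ t₂ - t₁ := Int.ModEq.dvd ht
  set q : ℤ := 2 ^ (m - k) with hq
  have hqpos : 0 < q := by positivity
  set n : ℕ := (s % q).toNat with hn
  have hns : q ∣ s - n := by
    rw [hn, Int.toNat_of_nonneg (Int.emod_nonneg s hqpos.ne')]
    exact Int.dvd_self_sub_of_emod_eq rfl
  have hpow : (2:ℤ) ^ k * q = 2 ^ m := by
    have hkm : k + (m - k) = m := by omega
    rw [hq, ← pow_add, hkm]
  have hmod : t₁ + 2 ^ k * (n : ℤ) ≡ t₂ [ZMOD (2:ℤ) ^ m] := by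
    rw [Int.modEq_iff_dvd]
    obtain ⟨u, hu⟩ := hns
    refine ⟨u, ?_⟩
    rw [← hpow]
    linear_combination hs + 2^k * hu
  calc NN p m g k t₁ = NN p m g k (t₁ + 2 ^ k * (n : ℤ)) :=
        (NN_add_nat p m g k hord hk t₁ n).symm
    _ = NN p m g k t₂ := NN_congr p m g k hord hmod
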